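/- For all m ≥ 0 and n ≥ 3m, the number of linear chord diagrams of size n with all chords of length at least n - m equals |C_{2m}(3m)| · (m+1)^{n-3m}, where C_{2m}(3m) is the set of diagrams of size 3m with all chords of length at least 2m. -/

import Mathlib

open Finset

def isM (k : ℕ) (A B : Finset ℕ) (M : Finset (ℕ × ℕ)) : Prop :=
  M.image Prod.fst = A ∧ M.image Prod.snd = B ∧ M.card = A.card ∧ M.card = B.card ∧
    ∀ p ∈ M, p.1 + k ≤ p.2

instance (k : ℕ) (A B : Finset ℕ) (M : Finset (ℕ × ℕ)) : Decidable (isM k A B M) := by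
  unfold isM; infer_instance

def MS (k : ℕ) (A B : Finset ℕ) : Finset (Finset (ℕ × ℕ)) :=
  (A ×ˢ B).powerset.filter (isM k A B)

lemma mem_MS {k : ℕ} {A B : Finset ℕ} {M : Finset (ℕ × ℕ)} :
    M ∈ MS k A B ↔ isM k A B M := by
  simp only [MS, mem_filter, mem_powerset, and_iff_right_iff_imp]
  rintro ⟨h1, h2, -⟩ p hp
  rw [mem_product, ← h1, ← h2]
  exact ⟨mem_image_of_mem _ hp, mem_image_of_mem _ hp⟩

lemma isM.fst_injOn {k A B M} (h : isM k A B M) : Set.InjOn Prod.fst (M : Set (ℕ × ℕ)) := by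
  rw [← card_image_iff]; rw [h.1, ← h.2.2.1]

lemma isM.snd_injOn {k A B M} (h : isM k A B M) : Set.InjOn Prod.snd (M : Set (ℕ × ℕ)) := by
  rw [← card_image_iff]; rw [h.2.1, ← h.2.2.2.1]

lemma image_erase_injOn {α β : Type} [DecidableEq α] [DecidableEq β] {M : Finset α}
    {f : α → β} (hinj : Set.InjOn f (M : Set α)) {p : α} (hp : p ∈ M) :
    (M.erase p).image f = (M.image f).erase (f p) := by
  ext x
  constructor
  · intro hx
    obtain ⟨q, hq, rfl⟩ := mem_image.mp hx
    obtain ⟨hqne, hqM⟩ := mem_erase.mp hq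
    exact mem_erase.mpr ⟨fun he => hqne (hinj hqM hp he), mem_image_of_mem _ hqM⟩
  · intro hx
    obtain ⟨hxne, hxM⟩ := mem_erase.mp hx
    obtain ⟨q, hq, rfl⟩ := mem_image.mp hxM
    exact mem_image_of_mem _ (mem_erase.mpr ⟨fun he => hxne (by rw [he]), hq⟩)

lemma isM.erase {k A B M} (h : isM k A B M) {a0 b : ℕ} (hab : (a0, b) ∈ M) :
    isM k (A.erase a0) (B.erase b) (M.erase (a0, b)) := by
  obtain ⟨h1, h2, h3, h4, h5⟩ := h
  have hinjf := isM.fst_injOn (k:=k) (A:=A) (B:=B) ⟨h1, h2, h3, h4, h5⟩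
  have hinjs := isM.snd_injOn (k:=k) (A:=A) (B:=B) ⟨h1, h2, h3, h4, h5⟩
  refine ⟨?_, ?_, ?_, ?_, fun p hp => h5 p (mem_of_mem_erase hp)⟩
  · rw [image_erase_injOn hinjf hab, h1]
  · rw [image_erase_injOn hinjs hab, h2]
  · rw [card_erase_of_mem hab, card_erase_of_mem (h1 ▸ mem_image_of_mem _ hab), h3]
  · rw [card_erase_of_mem hab, card_erase_of_mem (h2 ▸ mem_image_of_mem _ hab), h4]

lemma isM.insert {k : ℕ} {A B : Finset ℕ} {M : Finset (ℕ × ℕ)} {a0 b : ℕ}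
    (h : isM k A B M) (haA : a0 ∉ A) (hbB : b ∉ B) (hk : a0 + k ≤ b) :
    isM k (insert a0 A) (insert b B) (Insert.insert (a0, b) M) := by
  obtain ⟨h1, h2, h3, h4, h5⟩ := h
  have hM : (a0, b) ∉ M := fun hm => haA (h1 ▸ mem_image_of_mem _ hm)
  refine ⟨?_, ?_, ?_, ?_, ?_⟩
  · rw [image_insert, h1]
  · rw [image_insert, h2]
  · rw [card_insert_of_notMem hM, card_insert_of_notMem haA, h3]
  · rw [card_insert_of_notMem hM, card_insert_of_notMem hbB, h4]
  · intro p hp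
    rcases mem_insert.mp hp with rfl | hp
    · exact hk
    · exact h5 p hp

lemma MS_decomp (k : ℕ) (A B : Finset ℕ) (hA : A.Nonempty) :
    MS k A B = (B.filter (fun b => A.max' hA + k ≤ b)).biUnion
      (fun b => (MS k (A.erase (A.max' hA)) (B.erase b)).image (Insert.insert (A.max' hA, b))) := by
  set a0 := A.max' hA with ha0
  ext M
  simp only [mem_biUnion, mem_filter, mem_image]
  constructor
  · intro hM
    have h := mem_MS.mp hM
    have ha0A : a0 ∈ A := A.max'_mem hA
    rw [← h.1] at ha0A
    obtain ⟨p, hpM, hp1⟩ := mem_image.mp ha0A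
    obtain ⟨a, b⟩ := p
    simp only at hp1
    subst hp1
    refine ⟨b, ⟨h.2.1 ▸ mem_image_of_mem _ hpM, h.2.2.2.2 _ hpM⟩, M.erase (a0, b),
      mem_MS.mpr (h.erase hpM), ?_⟩
    exact insert_erase hpM
  · rintro ⟨b, ⟨hbB, hkb⟩, M', hM', rfl⟩
    have h' := mem_MS.mp hM'
    have := h'.insert (A.notMem_erase a0) (B.notMem_erase b) hkb
    rw [insert_erase (A.max'_mem hA), insert_erase hbB] at this
    exact mem_MS.mpr this

lemma MS_card (k : ℕ) (N : ℕ) : ∀ (A B : Finset ℕ), A.card = N → A.card = B.card →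
    (∀ a ∈ A, (A.filter (fun x => a < x)).card < (B.filter (fun b => a + k ≤ b)).card) →
    (MS k A B).card =
      ∏ a ∈ A, ((B.filter (fun b => a + k ≤ b)).card - (A.filter (fun x => a < x)).card) := by
  induction N with
  | zero =>
    intro A B hA hAB _
    rw [card_eq_zero] at hA
    subst hA
    have hB : B = ∅ := card_eq_zero.mp (by simpa using hAB.symm)
    subst hB
    have : MS k ∅ ∅ = {∅} := by
      ext M
      rw [mem_MS, mem_singleton]
      constructor
      · rintro ⟨h1, -, -, -, -⟩
        rw [← image_eq_empty (f := Prod.fst)]; exact h1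
      · rintro rfl
        exact ⟨rfl, rfl, rfl, rfl, by simp⟩
    rw [this, prod_empty, card_singleton]
  | succ N ih =>
    intro A B hA hAB hpos
    have hAne : A.Nonempty := card_pos.mp (hA ▸ N.succ_pos)
    set a0 := A.max' hAne with ha0def
    have ha0A : a0 ∈ A := A.max'_mem hAne
    set B0 := B.filter (fun b => a0 + k ≤ b) with hB0
    have hlt : ∀ a ∈ A.erase a0, a < a0 := fun a ha =>
      lt_of_le_of_ne (A.le_max' a (mem_of_mem_erase ha)) (ne_of_mem_erase ha)
    -- each inner piece has the same cardinality
    have hinner : ∀ b ∈ B0, ((MS k (A.erase a0) (B.erase b)).image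
        (Insert.insert (a0, b))).card =
        ∏ a ∈ A.erase a0,
          ((B.filter (fun x => a + k ≤ x)).card - 1 - ((A.filter (fun x => a < x)).card - 1)) := by
      intro b hb
      obtain ⟨hbB, hba0⟩ := mem_filter.mp hb
      have hbfac : ∀ a ∈ A.erase a0, b ∈ B.filter (fun x => a + k ≤ x) := by
        intro a ha
        exact mem_filter.mpr ⟨hbB, by have := hlt a ha; omega⟩
      have ha0fac : ∀ a ∈ A.erase a0, a0 ∈ A.filter (fun x => a < x) :=
        fun a ha => mem_filter.mpr ⟨ha0A, hlt a ha⟩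
      have hximg : ∀ M' ∈ MS k (A.erase a0) (B.erase b), (a0, b) ∉ M' := by
        intro M' hM' hmem
        have := (mem_MS.mp hM').1 ▸ mem_image_of_mem Prod.fst hmem
        exact A.notMem_erase a0 this
      rw [card_image_of_injOn (fun M1 h1 M2 h2 he => by
        have h1' := hximg M1 h1
        have h2' := hximg M2 h2
        rw [← erase_insert h1', he, erase_insert h2'])]
      rw [ih (A.erase a0) (B.erase b)
        (by rw [card_erase_of_mem ha0A, hA]; rfl)
        (by rw [card_erase_of_mem ha0A, card_erase_of_mem hbB, hAB])
        (by
          intro a ha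
          rw [filter_erase, filter_erase,
            card_erase_of_mem (hbfac a ha), card_erase_of_mem (ha0fac a ha)]
          have h1 := card_pos.mpr ⟨a0, ha0fac a ha⟩
          have h2 := hpos a (mem_of_mem_erase ha)
          omega)]
      apply prod_congr rfl
      intro a ha
      rw [filter_erase, filter_erase,
        card_erase_of_mem (hbfac a ha), card_erase_of_mem (ha0fac a ha)]
    rw [MS_decomp k A B hAne, card_biUnion, ← ha0def, ← hB0]
    · rw [Finset.sum_congr rfl hinner, sum_const, smul_eq_mul,
        ← Finset.mul_prod_erase A _ ha0A]
      have hy0 : (A.filter (fun x => a0 < x)).card = 0 := by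
        rw [card_eq_zero, filter_eq_empty_iff]
        intro x hx
        exact not_lt.mpr (A.le_max' x hx)
      rw [hy0, Nat.sub_zero, ← hB0]
      congr 1
      apply prod_congr rfl
      intro a ha
      have h1 : 1 ≤ (A.filter (fun x => a < x)).card :=
        card_pos.mpr ⟨a0, mem_filter.mpr ⟨ha0A, hlt a ha⟩⟩
      have h2 := hpos a (mem_of_mem_erase ha)
      omega
    · -- disjointness
      intro b1 hb1 b2 hb2 hne
      rw [Function.onFun, disjoint_left]
      intro M hM1 hM2
      obtain ⟨M1, hM1', rfl⟩ := mem_image.mp hM1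
      obtain ⟨M2, hM2', he⟩ := mem_image.mp hM2
      have : (a0, b2) ∈ Insert.insert (a0, b1) M1 := he ▸ mem_insert_self _ _
      rcases mem_insert.mp this with h | h
      · exact hne (congrArg Prod.snd h).symm
      · have := (mem_MS.mp hM1').1 ▸ mem_image_of_mem Prod.fst h
        exact A.notMem_erase a0 ((by exact this) : a0 ∈ A.erase a0)

def Dg (n k : ℕ) : Finset (Finset (ℕ × ℕ)) :=
  (Icc 1 (2*n) ×ˢ Icc 1 (2*n)).powerset.filter
    (fun M => M.image Prod.fst ∪ M.image Prod.snd = Icc 1 (2*n) ∧ M.card = n ∧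
      ∀ p ∈ M, p.1 < p.2 ∧ k ≤ p.2 - p.1)

lemma mem_Dg {n k : ℕ} {M : Finset (ℕ × ℕ)} :
    M ∈ Dg n k ↔ M.image Prod.fst ∪ M.image Prod.snd = Icc 1 (2*n) ∧ M.card = n ∧
      ∀ p ∈ M, p.1 < p.2 ∧ k ≤ p.2 - p.1 := by
  simp only [Dg, mem_filter, mem_powerset, and_iff_right_iff_imp]
  rintro ⟨h1, -, -⟩ p hp
  rw [mem_product, ← h1]
  exact ⟨mem_union_left _ (mem_image_of_mem _ hp), mem_union_right _ (mem_image_of_mem _ hp)⟩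

lemma Dg_facts {n k : ℕ} {M : Finset (ℕ × ℕ)} (h : M ∈ Dg n k) :
    Disjoint (M.image Prod.fst) (M.image Prod.snd) ∧
      (M.image Prod.fst).card = n ∧ (M.image Prod.snd).card = n := by
  obtain ⟨h1, h2, -⟩ := mem_Dg.mp h
  have c1 : (M.image Prod.fst).card ≤ n := h2 ▸ card_image_le
  have c2 : (M.image Prod.snd).card ≤ n := h2 ▸ card_image_le
  have hu : (M.image Prod.fst ∪ M.image Prod.snd).card = 2*n := by
    rw [h1, Nat.card_Icc]; omega
  have hle := card_union_le (M.image Prod.fst) (M.image Prod.snd)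
  have hint := card_inter_add_card_union (M.image Prod.fst) (M.image Prod.snd)
  have hdis : ((M.image Prod.fst) ∩ (M.image Prod.snd)).card = 0 := by omega
  exact ⟨disjoint_iff_inter_eq_empty.mpr (card_eq_zero.mp hdis), by omega, by omega⟩

lemma Dg_zero : Dg 0 0 = {∅} := by
  ext M
  rw [mem_Dg, mem_singleton]
  constructor
  · rintro ⟨-, h2, -⟩
    exact card_eq_zero.mp h2
  · rintro rfl
    simp

lemma Dg_eq_biUnion (m k : ℕ) (hk : 2*m ≤ k) (hk1 : 1 ≤ k) :
    Dg (k+m) k = ((Icc 1 (2*m)).powersetCard m).biUnion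
      (fun U => MS k (Icc 1 k ∪ U.image (· + k))
        (Icc 1 (2*(k+m)) \ (Icc 1 k ∪ U.image (· + k)))) := by
  ext M
  simp only [mem_biUnion, mem_powersetCard]
  constructor
  · intro hM
    obtain ⟨h1, h2, h3⟩ := mem_Dg.mp hM
    obtain ⟨hdis, hcf, hcs⟩ := Dg_facts hM
    set A := M.image Prod.fst with hA
    set B := M.image Prod.snd with hB
    have hAsub : A ⊆ Icc 1 (2*(k+m)) := h1 ▸ subset_union_left
    have hBsub : B ⊆ Icc 1 (2*(k+m)) := h1 ▸ subset_union_right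
    -- small points are starts
    have claim1 : Icc 1 k ⊆ A := by
      intro x hx
      rw [mem_Icc] at hx
      have hxi : x ∈ A ∪ B := by rw [h1, mem_Icc]; omega
      rcases mem_union.mp hxi with hxA | hxB
      · exact hxA
      · exfalso
        obtain ⟨p, hp, rfl⟩ := mem_image.mp hxB
        have hf : p.1 ∈ A := mem_image_of_mem _ hp
        have := mem_Icc.mp (hAsub hf)
        have := h3 p hp
        omega
    -- starts are at most k + 2m
    have claim2 : ∀ x ∈ A, x ≤ k + 2*m := by
      intro x hxA
      by_contra hc
      obtain ⟨p, hp, rfl⟩ := mem_image.mp hxA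
      have hs : p.2 ∈ B := mem_image_of_mem _ hp
      have := mem_Icc.mp (hBsub hs)
      have := h3 p hp
      omega
    set U := (A.filter (fun x => k < x)).image (· - k) with hU
    have hTU : U.image (· + k) = A.filter (fun x => k < x) := by
      rw [hU, image_image]
      rw [image_congr (g := id), image_id]
      intro x hx
      have := (mem_filter.mp hx).2
      simp only [Function.comp_apply, id_eq]
      omega
    have hAT : A = Icc 1 k ∪ U.image (· + k) := by
      rw [hTU]
      ext x
      simp only [mem_union, mem_filter, mem_Icc]
      constructor
      · intro hx
        have := mem_Icc.mp (hAsub hx)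
        by_cases hxk : k < x
        · exact Or.inr ⟨hx, hxk⟩
        · exact Or.inl ⟨by omega, by omega⟩
      · rintro (hx | ⟨hx, -⟩)
        · exact claim1 (mem_Icc.mpr hx)
        · exact hx
    have hUsub : U ⊆ Icc 1 (2*m) := by
      intro u hu
      obtain ⟨x, hx, rfl⟩ := mem_image.mp hu
      obtain ⟨hxA, hxk⟩ := mem_filter.mp hx
      have := claim2 x hxA
      rw [mem_Icc]; omega
    have hUcard : U.card = m := by
      have hinj : Set.InjOn (· - k) ((A.filter (fun x => k < x)) : Set ℕ) := by
        intro x hx y hy hxy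
        simp only [coe_filter, Set.mem_setOf_eq] at hx hy
        simp only at hxy
        omega
      have h5 : (Icc 1 k ∪ A.filter (fun x => k < x)).card = k + m := by
        rw [← hTU, ← hAT, hcf]
      have h6 : Disjoint (Icc 1 k) (A.filter (fun x => k < x)) := by
        rw [disjoint_left]
        intro x hx hx2
        have := mem_Icc.mp hx
        have := (mem_filter.mp hx2).2
        omega
      rw [hU, card_image_of_injOn hinj]
      rw [card_union_of_disjoint h6, Nat.card_Icc] at h5
      omega
    refine ⟨U, ⟨hUsub, hUcard⟩, mem_MS.mpr ⟨hAT ▸ rfl, ?_, by rw [h2, ← hcf, hAT], ?_, ?_⟩⟩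
    · rw [← hAT, ← h1, union_sdiff_cancel_left hdis]  -- B = (A ∪ B) \ A
    · rw [← hAT, ← h1, union_sdiff_cancel_left hdis, h2, ← hcs]
    · intro p hp
      have := h3 p hp
      omega
  · rintro ⟨U, ⟨hUsub, hUcard⟩, hM⟩
    obtain ⟨h1, h2, h3, h4, h5⟩ := mem_MS.mp hM
    have hAsub : Icc 1 k ∪ U.image (· + k) ⊆ Icc 1 (2*(k+m)) := by
      intro x hx
      rcases mem_union.mp hx with hx | hx
      · have := mem_Icc.mp hx; rw [mem_Icc]; omega
      · obtain ⟨u, hu, rfl⟩ := mem_image.mp hx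
        have := mem_Icc.mp (hUsub hu)
        rw [mem_Icc]; omega
    have hdisj : Disjoint (Icc 1 k) (U.image (· + k)) := by
      rw [disjoint_left]
      intro x hx hx2
      obtain ⟨u, hu, rfl⟩ := mem_image.mp hx2
      have := mem_Icc.mp (hUsub hu)
      have := mem_Icc.mp hx
      omega
    have hAcard : (Icc 1 k ∪ U.image (· + k)).card = k + m := by
      rw [card_union_of_disjoint hdisj, Nat.card_Icc,
        card_image_of_injective _ (add_left_injective k), hUcard]
      omega
    rw [mem_Dg]
    refine ⟨?_, by rw [h3, hAcard], ?_⟩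
    · rw [h1, h2, union_sdiff_of_subset hAsub]
    · intro p hp
      have := h5 p hp
      omega

def G (m : ℕ) (U : Finset ℕ) : ℕ :=
  (∏ i ∈ Icc 1 (2*m), (1 + (U.filter (fun v => v ≤ i - 1)).card)) *
  ∏ u ∈ U, (m + 1 + (U.filter (fun v => v ≤ u)).card - u)

section factors

variable {m k : ℕ} {U : Finset ℕ}

lemma cU_le (hU : U ⊆ Icc 1 (2*m)) (hUc : U.card = m) (j : ℕ) :
    (U.filter (fun v => v ≤ j)).card ≤ m := hUc ▸ card_le_card (filter_subset _ _)

lemma cU_ge (hU : U ⊆ Icc 1 (2*m)) (hUc : U.card = m) {u : ℕ} (hu : u ≤ 2*m) :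
    u ≤ m + (U.filter (fun v => v ≤ u)).card := by
  have h1 : (Icc 1 u) ∩ U = U.filter (fun v => v ≤ u) := by
    ext v
    simp only [mem_inter, mem_Icc, mem_filter]
    constructor
    · rintro ⟨⟨-, h⟩, hv⟩; exact ⟨hv, h⟩
    · rintro ⟨hv, h⟩; exact ⟨⟨(mem_Icc.mp (hU hv)).1, h⟩, hv⟩
  have h2 := card_sdiff_add_card_inter (Icc 1 u) U
  have h3 : (Icc 1 u \ U).card ≤ (Icc 1 (2*m) \ U).card :=
    card_le_card (sdiff_subset_sdiff (Icc_subset_Icc le_rfl hu) Subset.rfl)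
  have h4 : (Icc 1 (2*m) \ U).card = 2*m - m := by
    rw [card_sdiff_of_subset hU, Nat.card_Icc, hUc]
    omega
  rw [h1] at h2
  have := Nat.card_Icc 1 u
  omega

lemma filter_sdiff' (s t : Finset ℕ) (p : ℕ → Prop) [DecidablePred p] :
    (s \ t).filter p = s.filter p \ t.filter p := by
  ext x
  simp only [mem_filter, mem_sdiff]
  tauto

lemma Icc_filter_le' (t c : ℕ) (hc : 1 ≤ c) :
    (Icc 1 t).filter (fun x => c ≤ x) = Icc c t := by
  ext x
  simp only [mem_filter, mem_Icc]
  omega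

lemma Icc_filter_lt' (t c : ℕ) :
    (Icc 1 t).filter (fun x => c < x) = Icc (c+1) t := by
  ext x
  simp only [mem_filter, mem_Icc]
  omega

lemma yA_left (hU : U ⊆ Icc 1 (2*m)) (hUc : U.card = m) {i : ℕ} (hi : i ∈ Icc 1 k) :
    ((Icc 1 k ∪ U.image (· + k)).filter (fun x => i < x)).card = (k - i) + m := by
  rw [mem_Icc] at hi
  have htrue : (U.image (· + k)).filter (fun x => i < x) = U.image (· + k) := by
    apply filter_true_of_mem
    intro x hx
    obtain ⟨u, hu, rfl⟩ := mem_image.mp hx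
    have := mem_Icc.mp (hU hu)
    omega
  have hdisj : Disjoint (Icc (i+1) k) (U.image (· + k)) := by
    rw [disjoint_left]
    intro x hx hx2
    obtain ⟨u, hu, rfl⟩ := mem_image.mp hx2
    have := mem_Icc.mp (hU hu)
    have := mem_Icc.mp hx
    omega
  rw [filter_union, Icc_filter_lt', htrue, card_union_of_disjoint hdisj,
    Nat.card_Icc, card_image_of_injective _ (add_left_injective k), hUc]
  omega

lemma yA_mid (hU : U ⊆ Icc 1 (2*m)) (hUc : U.card = m) {u : ℕ} (hu : u ∈ U) :
    ((Icc 1 k ∪ U.image (· + k)).filter (fun x => u + k < x)).card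
      = m - (U.filter (fun v => v ≤ u)).card := by
  rw [filter_union, Icc_filter_lt', Icc_eq_empty (by omega), filter_image]
  rw [empty_union, card_image_of_injective _ (add_left_injective k)]
  have hsplit := card_filter_add_card_filter_not (s := U)
    (p := fun v => v ≤ u)
  have : U.filter (fun v => ¬ v ≤ u) = U.filter (fun a => u + k < a + k) := by
    apply filter_congr
    intro x hx
    omega
  rw [this] at hsplit
  rw [hUc] at hsplit
  omega

lemma xB_left (hk : 2*m ≤ k) (hU : U ⊆ Icc 1 (2*m)) (hUc : U.card = m)
    {i : ℕ} (hi : i ∈ Icc 1 k) :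
    ((Icc 1 (2*(k+m)) \ (Icc 1 k ∪ U.image (· + k))).filter (fun b => i + k ≤ b)).card
      = (k + m + 1 - i) + (U.filter (fun v => v ≤ i - 1)).card := by
  rw [mem_Icc] at hi
  rw [filter_sdiff', Icc_filter_le' _ _ (by omega), filter_union, filter_image]
  have h1 : (Icc 1 k).filter (fun b => i + k ≤ b) = ∅ := by
    rw [eq_empty_iff_forall_notMem]
    intro x hx
    have := mem_filter.mp hx
    have := mem_Icc.mp this.1
    omega
  have h2 : U.filter (fun a => i + k ≤ a + k) = U.filter (fun v => ¬ v ≤ i - 1) := by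
    apply filter_congr
    intro x hx
    omega
  rw [h1, h2, empty_union]
  have hsub : (U.filter (fun v => ¬ v ≤ i - 1)).image (· + k) ⊆ Icc (i + k) (2*(k+m)) := by
    intro x hx
    obtain ⟨u, hu, rfl⟩ := mem_image.mp hx
    obtain ⟨huU, hule⟩ := mem_filter.mp hu
    have := mem_Icc.mp (hU huU)
    rw [mem_Icc]
    omega
  rw [card_sdiff_of_subset hsub, Nat.card_Icc, card_image_of_injective _ (add_left_injective k)]
  have hsplit := card_filter_add_card_filter_not (s := U)
    (p := fun v => v ≤ i - 1)
  have hle := cU_le (m := m) hU hUc (i - 1)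
  rw [hUc] at hsplit
  omega

lemma xB_mid (hk : 2*m ≤ k) (hU : U ⊆ Icc 1 (2*m)) (hUc : U.card = m)
    {u : ℕ} (hu : u ∈ U) :
    ((Icc 1 (2*(k+m)) \ (Icc 1 k ∪ U.image (· + k))).filter (fun b => (u + k) + k ≤ b)).card
      = 2*m + 1 - u := by
  have hu2 := mem_Icc.mp (hU hu)
  rw [filter_sdiff', Icc_filter_le' _ _ (by omega), filter_union, filter_image]
  have h1 : (Icc 1 k).filter (fun b => (u + k) + k ≤ b) = ∅ := by
    rw [eq_empty_iff_forall_notMem]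
    intro x hx
    have := mem_filter.mp hx
    have := mem_Icc.mp this.1
    omega
  have h2 : U.filter (fun a => (u + k) + k ≤ a + k) = ∅ := by
    rw [eq_empty_iff_forall_notMem]
    intro x hx
    obtain ⟨hxU, hxle⟩ := mem_filter.mp hx
    have := mem_Icc.mp (hU hxU)
    omega
  rw [h1, h2, empty_union, image_empty, sdiff_empty, Nat.card_Icc]
  omega

end factors

lemma A_filter_gt {m k : ℕ} {U : Finset ℕ} (hU : U ⊆ Icc 1 (2*m)) (hk : 2*m ≤ k) :
    (Icc 1 k ∪ U.image (· + k)).filter (fun x => k < x) = U.image (· + k) := by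
  rw [filter_union]
  have h1 : (Icc 1 k).filter (fun x => k < x) = ∅ := by
    rw [eq_empty_iff_forall_notMem]
    intro x hx
    obtain ⟨h, h'⟩ := mem_filter.mp hx
    have := mem_Icc.mp h
    omega
  have h2 : (U.image (· + k)).filter (fun x => k < x) = U.image (· + k) := by
    apply filter_true_of_mem
    intro x hx
    obtain ⟨u, hu, rfl⟩ := mem_image.mp hx
    have := mem_Icc.mp (hU hu)
    omega
  rw [h1, h2, empty_union]

lemma MS_card_U (m k : ℕ) (hk : 2*m ≤ k) (hk1 : 1 ≤ k) {U : Finset ℕ}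
    (hU : U ⊆ Icc 1 (2*m)) (hUc : U.card = m) :
    (MS k (Icc 1 k ∪ U.image (· + k))
      (Icc 1 (2*(k+m)) \ (Icc 1 k ∪ U.image (· + k)))).card
      = G m U * (m+1)^(k - 2*m) := by
  set A := Icc 1 k ∪ U.image (· + k) with hA
  set B := Icc 1 (2*(k+m)) \ A with hB
  have hdisj : Disjoint (Icc 1 k) (U.image (· + k)) := by
    rw [disjoint_left]
    intro x hx hx2
    obtain ⟨u, hu, rfl⟩ := mem_image.mp hx2
    have := mem_Icc.mp (hU hu)
    have := mem_Icc.mp hx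
    omega
  have hAcard : A.card = k + m := by
    rw [hA, card_union_of_disjoint hdisj, Nat.card_Icc,
      card_image_of_injective _ (add_left_injective k), hUc]
    omega
  have hAsub : A ⊆ Icc 1 (2*(k+m)) := by
    intro x hx
    rcases mem_union.mp hx with hx | hx
    · have := mem_Icc.mp hx; rw [mem_Icc]; omega
    · obtain ⟨u, hu, rfl⟩ := mem_image.mp hx
      have := mem_Icc.mp (hU hu)
      rw [mem_Icc]; omega
  have hBcard : B.card = k + m := by
    rw [hB, card_sdiff_of_subset hAsub, Nat.card_Icc, hAcard]
    omega
  have hpos : ∀ a ∈ A, (A.filter (fun x => a < x)).card <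
      (B.filter (fun b => a + k ≤ b)).card := by
    intro a ha
    rcases mem_union.mp ha with hi | hx
    · rw [hA, hB, yA_left hU hUc hi, xB_left hk hU hUc hi]
      have := mem_Icc.mp hi
      omega
    · obtain ⟨u, hu, rfl⟩ := mem_image.mp hx
      rw [hA, hB, yA_mid hU hUc hu, xB_mid hk hU hUc hu]
      have h1 := cU_le hU hUc u
      have h2 := cU_ge hU hUc (mem_Icc.mp (hU hu)).2
      omega
  rw [MS_card k (k+m) A B hAcard (by omega) hpos]
  rw [hA, prod_union hdisj, ← hA]
  have hleft : ∏ i ∈ Icc 1 k, ((B.filter (fun b => i + k ≤ b)).card -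
      (A.filter (fun x => i < x)).card)
      = ∏ i ∈ Icc 1 k, (1 + (U.filter (fun v => v ≤ i - 1)).card) := by
    apply prod_congr rfl
    intro i hi
    rw [hA, hB, yA_left hU hUc hi, xB_left hk hU hUc hi]
    have := mem_Icc.mp hi
    omega
  have hmid : ∏ x ∈ U.image (· + k), ((B.filter (fun b => x + k ≤ b)).card -
      (A.filter (fun y => x < y)).card)
      = ∏ u ∈ U, (m + 1 + (U.filter (fun v => v ≤ u)).card - u) := by
    rw [prod_image (fun x _ y _ h => by omega)]
    apply prod_congr rfl
    intro u hu
    rw [hA, hB, yA_mid hU hUc hu, xB_mid hk hU hUc hu]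
    have h1 := cU_le hU hUc u
    have h2 := cU_ge hU hUc (mem_Icc.mp (hU hu)).2
    omega
  rw [hleft, hmid]
  have hsplit : Icc 1 k = Icc 1 (2*m) ∪ Icc (2*m+1) k := by
    ext x
    simp only [mem_union, mem_Icc]
    omega
  have hd2 : Disjoint (Icc 1 (2*m)) (Icc (2*m+1) k) := by
    rw [disjoint_left]
    intro x hx hx2
    have := mem_Icc.mp hx
    have := mem_Icc.mp hx2
    omega
  rw [hsplit, prod_union hd2]
  have htail : ∏ i ∈ Icc (2*m+1) k, (1 + (U.filter (fun v => v ≤ i - 1)).card)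
      = (m+1)^(k - 2*m) := by
    have : ∀ i ∈ Icc (2*m+1) k, (1 + (U.filter (fun v => v ≤ i - 1)).card) = m + 1 := by
      intro i hi
      have hi' := mem_Icc.mp hi
      have : U.filter (fun v => v ≤ i - 1) = U := by
        apply filter_true_of_mem
        intro v hv
        have := mem_Icc.mp (hU hv)
        omega
      rw [this, hUc]
      omega
    rw [prod_congr rfl this, prod_const, Nat.card_Icc]
    congr 1
    omega
  rw [htail, G]
  ring

lemma Dg_card (m k : ℕ) (hk : 2*m ≤ k) (hk1 : 1 ≤ k) :
    (Dg (k+m) k).card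
      = (∑ U ∈ (Icc 1 (2*m)).powersetCard m, G m U) * (m+1)^(k - 2*m) := by
  rw [Dg_eq_biUnion m k hk hk1, card_biUnion]
  · rw [sum_mul]
    apply sum_congr rfl
    intro U hU
    obtain ⟨hUs, hUc⟩ := mem_powersetCard.mp hU
    exact MS_card_U m k hk hk1 hUs hUc
  · intro U1 h1 U2 h2 hne
    rw [Function.onFun, disjoint_left]
    intro M hM1 hM2
    apply hne
    have e1 := (mem_MS.mp hM1).1
    have e2 := (mem_MS.mp hM2).1
    have hA : Icc 1 k ∪ U1.image (· + k) = Icc 1 k ∪ U2.image (· + k) := by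
      rw [← e1, ← e2]
    obtain ⟨hU1s, -⟩ := mem_powersetCard.mp h1
    obtain ⟨hU2s, -⟩ := mem_powersetCard.mp h2
    have := congrArg (fun s => s.filter (fun x => k < x)) hA
    simp only [A_filter_gt hU1s hk, A_filter_gt hU2s hk] at this
    have hinj : Function.Injective (· + k) := add_left_injective k
    exact (Finset.image_injective hinj) this

/-- The set of linear chord diagrams of size `n` in which every chord has length at least `k`:
partitions of `{1,...,2n}` into blocks of size two `{s,e}` with `s < e` and `e - s ≥ k`. -/
def LCD (n k : ℕ) : Set (Finpartition (Finset.Icc 1 (2*n))) :=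
  {P | ∀ p ∈ P.parts, ∃ s e : ℕ, s < e ∧ p = {s, e} ∧ k ≤ e - s}

def toPair (p : Finset ℕ) : ℕ × ℕ := (∑ x ∈ p, x - p.sup id, p.sup id)

lemma toPair_pair {s e : ℕ} (h : s < e) : toPair {s, e} = (s, e) := by
  have h1 : ({s, e} : Finset ℕ).sup id = e := by
    rw [sup_insert, sup_singleton]
    simpa using h.le
  have h2 : ∑ x ∈ ({s, e} : Finset ℕ), x = s + e := sum_pair h.ne
  rw [toPair, h1, h2]
  simp

lemma toM_mem {n k : ℕ} {P : Finpartition (Finset.Icc 1 (2*n))} (hP : P ∈ LCD n k) :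
    P.parts.image toPair ∈ Dg n k := by
  have hpair : ∀ p ∈ P.parts, ∃ s e : ℕ, s < e ∧ p = {s, e} ∧ k ≤ e - s := hP
  rw [mem_Dg]
  have key : ∀ x, (x ∈ (P.parts.image toPair).image Prod.fst ∪
      (P.parts.image toPair).image Prod.snd) ↔ ∃ p ∈ P.parts, x ∈ p := by
    intro x
    simp only [mem_union, image_image, mem_image]
    constructor
    · rintro (⟨p, hp, rfl⟩ | ⟨p, hp, rfl⟩) <;>
      · obtain ⟨s, e, hse, rfl, -⟩ := hpair p hp
        rw [Function.comp_apply, toPair_pair hse]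
        exact ⟨_, hp, by simp⟩
    · rintro ⟨p, hp, hx⟩
      obtain ⟨s, e, hse, rfl, -⟩ := hpair p hp
      rcases mem_insert.mp hx with rfl | hx
      · exact Or.inl ⟨_, hp, by rw [Function.comp_apply, toPair_pair hse]⟩
      · rw [mem_singleton] at hx
        subst hx
        exact Or.inr ⟨_, hp, by rw [Function.comp_apply, toPair_pair hse]⟩
  refine ⟨?_, ?_, ?_⟩
  · ext x
    rw [key x]
    constructor
    · rintro ⟨p, hp, hx⟩
      exact P.le hp hx
    · intro hx
      have : x ∈ P.parts.sup id := by rw [P.sup_parts]; exact hx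
      rw [mem_sup] at this
      obtain ⟨p, hp, hx⟩ := this
      exact ⟨p, hp, hx⟩
  · have hinj : Set.InjOn toPair (P.parts : Set (Finset ℕ)) := by
      intro p hp q hq hpq
      obtain ⟨s, e, hse, rfl, -⟩ := hpair p hp
      obtain ⟨s', e', hse', rfl, -⟩ := hpair q hq
      rw [toPair_pair hse, toPair_pair hse'] at hpq
      simp only [Prod.mk.injEq] at hpq
      rw [hpq.1, hpq.2]
    rw [card_image_of_injOn hinj]
    have hsum := P.sum_card_parts
    have hconst : ∀ p ∈ P.parts, p.card = 2 := by
      intro p hp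
      obtain ⟨s, e, hse, rfl, -⟩ := hpair p hp
      rw [card_insert_of_notMem (by simp [hse.ne]), card_singleton]
    rw [sum_congr rfl hconst, sum_const, smul_eq_mul, Nat.card_Icc] at hsum
    omega
  · intro q hq
    obtain ⟨p, hp, rfl⟩ := mem_image.mp hq
    obtain ⟨s, e, hse, rfl, hk⟩ := hpair p hp
    rw [toPair_pair hse]
    exact ⟨hse, hk⟩

lemma card_LCD (n k : ℕ) : Nat.card (LCD n k) = (Dg n k).card := by
  have himg : (fun P : Finpartition (Finset.Icc 1 (2*n)) => P.parts.image toPair) ''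
      (LCD n k) = (Dg n k : Set (Finset (ℕ × ℕ))) := by
    apply Set.eq_of_subset_of_subset
    · rintro M ⟨P, hP, rfl⟩
      exact toM_mem hP
    · intro M hM
      simp only [Finset.mem_coe] at hM
      obtain ⟨h1, h2, h3⟩ := mem_Dg.mp hM
      obtain ⟨hdis, hcf, hcs⟩ := Dg_facts hM
      have hinjf : Set.InjOn Prod.fst (M : Set (ℕ × ℕ)) := by
        rw [← card_image_iff]; omega
      have hinjs : Set.InjOn Prod.snd (M : Set (ℕ × ℕ)) := by
        rw [← card_image_iff]; omega
      set parts := M.image (fun q => ({q.1, q.2} : Finset ℕ)) with hparts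
      have hmemp : ∀ b ∈ parts, ∃ q ∈ M, b = {q.1, q.2} := by
        intro b hb
        obtain ⟨q, hq, rfl⟩ := mem_image.mp hb
        exact ⟨q, hq, rfl⟩
      have hSI : parts.SupIndep id := by
        rw [supIndep_iff_pairwiseDisjoint]
        intro b1 hb1 b2 hb2 hne
        obtain ⟨q, hq, rfl⟩ := hmemp b1 hb1
        obtain ⟨r, hr, rfl⟩ := hmemp b2 hb2
        refine Finset.disjoint_left.mpr ?_
        intro x hx1 hx2
        have hqr : q ≠ r := fun h => hne (by rw [h])
        have hxq : x = q.1 ∨ x = q.2 := by simpa using hx1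
        have hxr : x = r.1 ∨ x = r.2 := by simpa using hx2
        have hq1 : q.1 ∈ M.image Prod.fst := mem_image_of_mem _ hq
        have hq2 : q.2 ∈ M.image Prod.snd := mem_image_of_mem _ hq
        have hr1 : r.1 ∈ M.image Prod.fst := mem_image_of_mem _ hr
        have hr2 : r.2 ∈ M.image Prod.snd := mem_image_of_mem _ hr
        rcases hxq with rfl | rfl <;> rcases hxr with h | h
        · exact hqr (hinjf hq hr h)
        · exact (disjoint_left.mp hdis hq1) (h ▸ hr2)
        · exact (disjoint_left.mp hdis hr1) (h ▸ hq2) |>.elim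
        · exact hqr (hinjs hq hr h)
      have hsup : parts.sup id = Finset.Icc 1 (2*n) := by
        rw [← h1]
        ext x
        rw [mem_sup]
        simp only [id_eq, mem_union, mem_image]
        constructor
        · rintro ⟨b, hb, hx⟩
          obtain ⟨q, hq, rfl⟩ := hmemp b hb
          rcases (by simpa using hx : x = q.1 ∨ x = q.2) with rfl | rfl
          · exact Or.inl ⟨q, hq, rfl⟩
          · exact Or.inr ⟨q, hq, rfl⟩
        · rintro (⟨q, hq, rfl⟩ | ⟨q, hq, rfl⟩)
          · exact ⟨{q.1, q.2}, mem_image_of_mem _ hq, by simp⟩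
          · exact ⟨{q.1, q.2}, mem_image_of_mem _ hq, by simp⟩
      set P := Finpartition.ofErase parts hSI hsup with hPdef
      have hPparts : P.parts = parts := by
        rw [hPdef]
        show parts.erase ⊥ = parts
        apply erase_eq_of_notMem
        intro hbot
        obtain ⟨q, hq, hbq⟩ := hmemp ⊥ hbot
        exact absurd hbq.symm (by simp [Finset.insert_ne_empty])
      refine ⟨P, ?_, ?_⟩
      · intro p hp
        rw [hPparts] at hp
        obtain ⟨q, hq, rfl⟩ := hmemp p hp
        obtain ⟨hlt, hle⟩ := h3 q hq
        exact ⟨q.1, q.2, hlt, rfl, hle⟩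
      · show P.parts.image toPair = M
        rw [hPparts, hparts, image_image]
        rw [image_congr (g := id), image_id]
        intro q hq
        have := (h3 q hq).1
        simp only [Function.comp_apply, id_eq]
        rw [toPair_pair this]
  have hinj : Set.InjOn (fun P : Finpartition (Finset.Icc 1 (2*n)) => P.parts.image toPair)
      (LCD n k) := by
    intro P hP Q hQ hPQ
    apply Finpartition.ext
    have hrec : ∀ (R : Finpartition (Finset.Icc 1 (2*n))), R ∈ LCD n k →
        (R.parts.image toPair).image (fun q => ({q.1, q.2} : Finset ℕ)) = R.parts := by
      intro R hR
      rw [image_image]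
      rw [image_congr (g := id), image_id]
      intro p hp
      obtain ⟨s, e, hse, rfl, -⟩ := hR p hp
      simp only [Function.comp_apply, id_eq]
      rw [toPair_pair hse]
    rw [← hrec P hP, ← hrec Q hQ]
    exact congrArg _ hPQ
  calc Nat.card (LCD n k) = (LCD n k).ncard := Nat.card_coe_set_eq _
    _ = ((fun P : Finpartition (Finset.Icc 1 (2*n)) => P.parts.image toPair) ''
        (LCD n k)).ncard := (Set.ncard_image_of_injOn hinj).symm
    _ = ((Dg n k : Set (Finset (ℕ × ℕ)))).ncard := by rw [himg]
    _ = (Dg n k).card := Set.ncard_coe_finset _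

lemma sum_G_zero : (∑ U ∈ (Icc 1 (2*0)).powersetCard 0, G 0 U) = 1 := by
  simp [powersetCard_zero, G]

theorem stmt_16 (m n : ℕ) (h3 : 3 * m ≤ n) :
    Nat.card (LCD n (n - m)) = Nat.card (LCD (3 * m) (2 * m)) * (m + 1) ^ (n - 3 * m) := by
  rcases Nat.eq_zero_or_pos n with rfl | hn
  · have hm : m = 0 := by omega
    subst hm
    simp
  · have hmn : m < n := by
      rcases Nat.eq_zero_or_pos m with rfl | hm
      · omega
      · omega
    obtain ⟨k, rfl⟩ : ∃ k, n = k + m := ⟨n - m, by omega⟩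
    have hk : 2*m ≤ k := by omega
    have hk1 : 1 ≤ k := by omega
    have e1 : k + m - m = k := by omega
    have e2 : k + m - 3*m = k - 2*m := by omega
    rw [e1, e2, card_LCD, Dg_card m k hk hk1, card_LCD]
    congr 1
    rcases Nat.eq_zero_or_pos m with rfl | hm
    · rw [Dg_zero, card_singleton]
      simp [G]
    · rw [show 3*m = 2*m + m by ring, Dg_card m (2*m) le_rfl (by omega)]
      simp
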